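/- Let b be an even positive integer. Suppose that for some positive integer m, every odd residue class j modulo b satisfies gcd(j − 2^k, b) = 1 for some k with 1 ≤ k ≤ m. Then for every odd integer a, the arithmetic progression a (mod b) contains a number of the form p + 2^k with p prime. -/

import Mathlib

theorem chen_q2_lemma (b : ℤ) (hb : 0 < b) (hbe : Even b) (m : ℕ) (hm : 1 ≤ m)
    (h : ∀ j : ℤ, Odd j → ∃ k : ℕ, 1 ≤ k ∧ k ≤ m ∧ Int.gcd (j - 2 ^ k) b = 1) :
    ∀ a : ℤ, Odd a → ∃ (p : ℕ) (k : ℕ), p.Prime ∧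
      ((p : ℤ) + 2 ^ k ≡ a [ZMOD b]) := by
  intro a ha
  obtain ⟨k, hk1, hkm, hgcd⟩ := h a ha
  set q : ℕ := b.toNat with hq
  have hq0 : 0 < q := by omega
  have hqb : (q : ℤ) = b := Int.toNat_of_nonneg hb.le
  haveI : NeZero q := ⟨hq0.ne'⟩
  have hco : IsCoprime (a - 2 ^ k) b := Int.isCoprime_iff_gcd_eq_one.mpr hgcd
  obtain ⟨u, v, huv⟩ := hco
  have hunit : IsUnit (((a - 2 ^ k : ℤ) : ZMod q)) := by
    apply IsUnit.of_mul_eq_one ((u : ℤ) : ZMod q)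
    have : ((u * (a - 2 ^ k) + v * b : ℤ) : ZMod q) = ((1 : ℤ) : ZMod q) := by
      rw [huv]
    have hb0 : ((b : ℤ) : ZMod q) = 0 := by
      rw [← hqb]
      exact_mod_cast ZMod.natCast_self q
    push_cast at this
    rw [hb0] at this
    simpa [mul_comm] using this
  obtain ⟨p, _, hp, hpc⟩ := Nat.forall_exists_prime_gt_and_eq_mod hunit 0
  refine ⟨p, k, hp, ?_⟩
  have : ((p : ℤ) : ZMod q) = ((a - 2 ^ k : ℤ) : ZMod q) := by exact_mod_cast hpc
  have hmod : (p : ℤ) ≡ a - 2 ^ k [ZMOD (q : ℤ)] := (ZMod.intCast_eq_intCast_iff' _ _ _).mp this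
  rw [hqb] at hmod
  have := hmod.add_right (2 ^ k)
  simpa using this
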